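/- arXiv:1604.01591 — 4 statements merged into one kernel-verified Lean document; each statement's English description precedes it below -/
import Mathlib

section
/- Let q(X) = (aᵀX − bᵀ)(I_d + XᵀX)^{-1}(Xᵀa − b) and s(a,b;X) = a(aᵀX − bᵀ) − X(I_d + XᵀX)^{-1}(Xᵀa − b)(aᵀX − bᵀ). Then the gradient of q with respect to X (under the trace inner product ⟨A,B⟩ = tr(ABᵀ)) equals 2·s(a,b;X)(I_d + XᵀX)^{-1}. -/
open Matrix

attribute [local instance] Matrix.frobeniusNormedAddCommGroup Matrix.frobeniusNormedSpace

/-- The TLS loss functional `q(a,b;X) = (aᵀX − bᵀ)(I_d + XᵀX)⁻¹(Xᵀa − b)`. -/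
noncomputable def tlsLoss {n d : ℕ} (a : Fin n → ℝ) (b : Fin d → ℝ)
    (X : Matrix (Fin n) (Fin d) ℝ) : ℝ :=
  (Xᵀ.mulVec a - b) ⬝ᵥ ((1 + Xᵀ * X)⁻¹.mulVec (Xᵀ.mulVec a - b))

/-- The TLS estimating function
`s(a,b;X) = a(aᵀX − bᵀ) − X(I_d + XᵀX)⁻¹(Xᵀa − b)(aᵀX − bᵀ)`. -/
noncomputable def tlsScore {n d : ℕ} (a : Fin n → ℝ) (b : Fin d → ℝ)
    (X : Matrix (Fin n) (Fin d) ℝ) : Matrix (Fin n) (Fin d) ℝ :=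
  vecMulVec a (Xᵀ.mulVec a - b) -
    X * (1 + Xᵀ * X)⁻¹ * vecMulVec (Xᵀ.mulVec a - b) (Xᵀ.mulVec a - b)

attribute [local instance] Matrix.frobeniusNormedRing Matrix.frobeniusNormedAlgebra
attribute [local instance 2000] Matrix.add Matrix.sub Matrix.neg Matrix.zero
  Matrix.addCommGroup Matrix.module

namespace TLSAux

/-- Matrix multiplication is a bounded bilinear map for the Frobenius norm. -/
theorem mulBBM (p q r : ℕ) :
    IsBoundedBilinearMap ℝ (fun z : Matrix (Fin p) (Fin q) ℝ × Matrix (Fin q) (Fin r) ℝ =>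
      z.1 * z.2) where
  add_left _ _ _ := Matrix.add_mul _ _ _
  smul_left _ _ _ := Matrix.smul_mul _ _ _
  add_right _ _ _ := Matrix.mul_add _ _ _
  smul_right _ _ _ := Matrix.mul_smul _ _ _
  bound := ⟨1, one_pos, fun x y => by
    simpa using Matrix.frobenius_norm_mul x y⟩

theorem hasFDerivAt_matmul {p q r : ℕ} {E : Type*} [NormedAddCommGroup E] [NormedSpace ℝ E]
    {P : E → Matrix (Fin p) (Fin q) ℝ} {Q : E → Matrix (Fin q) (Fin r) ℝ}
    {P' : E →L[ℝ] Matrix (Fin p) (Fin q) ℝ} {Q' : E →L[ℝ] Matrix (Fin q) (Fin r) ℝ} {x : E}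
    (hP : HasFDerivAt P P' x) (hQ : HasFDerivAt Q Q' x) :
    HasFDerivAt (fun y => P y * Q y)
      (((mulBBM p q r).deriv (P x, Q x)).comp (P'.prod Q')) x :=
  ((mulBBM p q r).hasFDerivAt (P x, Q x)).comp x (f := fun y => (P y, Q y)) (hP.prodMk hQ)

/-- Transpose as a continuous linear map (Frobenius norm). -/
noncomputable def transCLM (p q : ℕ) :
    Matrix (Fin p) (Fin q) ℝ →L[ℝ] Matrix (Fin q) (Fin p) ℝ :=
  LinearMap.toContinuousLinearMap
    { toFun := fun Y => Yᵀ
      map_add' := fun _ _ => Matrix.transpose_add _ _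
      map_smul' := fun _ _ => Matrix.transpose_smul _ _ }

@[simp] theorem transCLM_apply {p q : ℕ} (Y : Matrix (Fin p) (Fin q) ℝ) :
    transCLM p q Y = Yᵀ := rfl

/-- Trace as a continuous linear map. -/
noncomputable def traceCLM (p : ℕ) : Matrix (Fin p) (Fin p) ℝ →L[ℝ] ℝ :=
  LinearMap.toContinuousLinearMap (Matrix.traceLinearMap (Fin p) ℝ ℝ)

@[simp] theorem traceCLM_apply {p : ℕ} (Y : Matrix (Fin p) (Fin p) ℝ) :
    traceCLM p Y = Matrix.trace Y := rfl

end TLSAux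

open TLSAux in
/-- The gradient of `q` with respect to the trace inner product `⟨A,B⟩ = tr(ABᵀ)`
equals `2·s(a,b;X)(I_d + XᵀX)⁻¹`: its pairing with any direction `H` gives the derivative. -/
theorem gradient_tlsLoss {n d : ℕ} (a : Fin n → ℝ) (b : Fin d → ℝ)
    (X : Matrix (Fin n) (Fin d) ℝ) :
    ∀ H : Matrix (Fin n) (Fin d) ℝ,
      fderiv ℝ (fun Y => tlsLoss a b Y) X H =
        Matrix.trace ((2 • (tlsScore a b X * (1 + Xᵀ * X)⁻¹)) * Hᵀ) := by
  intro H
  classical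
  set A : Matrix (Fin n) (Fin 1) ℝ := Matrix.replicateCol (Fin 1) a with hA
  set B : Matrix (Fin d) (Fin 1) ℝ := Matrix.replicateCol (Fin 1) b with hB
  set c : Matrix (Fin n) (Fin d) ℝ → Matrix (Fin d) (Fin 1) ℝ := fun Y => Yᵀ * A - B with hc_def
  set M : Matrix (Fin n) (Fin d) ℝ → Matrix (Fin d) (Fin d) ℝ := fun Y => 1 + Yᵀ * Y with hM_def
  have hcol : ∀ Y, c Y = Matrix.replicateCol (Fin 1) (Yᵀ.mulVec a - b) := by
    intro Y
    ext i j
    simp [hc_def, hA, hB, Matrix.replicateCol, Matrix.mul_apply, Matrix.mulVec, dotProduct]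
  have dot_eq_trace : ∀ (v : Fin d → ℝ) (P : Matrix (Fin d) (Fin d) ℝ),
      v ⬝ᵥ P.mulVec v
        = Matrix.trace ((Matrix.replicateCol (Fin 1) v)ᵀ * P * Matrix.replicateCol (Fin 1) v) := by
    intro v P
    rw [Matrix.trace_fin_one]
    simp only [dotProduct, Matrix.mulVec, Matrix.mul_apply, Matrix.transpose_apply,
      Matrix.replicateCol, Matrix.of_apply, Finset.sum_mul, Finset.mul_sum]
    rw [Finset.sum_comm]
    exact Finset.sum_congr rfl fun i _ => Finset.sum_congr rfl fun j _ => by ring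
  have hloss : ∀ Y, tlsLoss a b Y = Matrix.trace ((c Y)ᵀ * (M Y)⁻¹ * c Y) := by
    intro Y
    rw [hcol Y, hM_def, tlsLoss, dot_eq_trace]
  -- invertibility of M X
  have hpd : (M X).PosDef := by
    have h1 : (1 : Matrix (Fin d) (Fin d) ℝ).PosDef := Matrix.PosDef.one
    have h2 : (Xᵀ * X).PosSemidef := by
      have := Matrix.posSemidef_conjTranspose_mul_self X
      simpa using this
    simpa [hM_def] using h1.add_posSemidef h2
  have hU : IsUnit (M X) := hpd.isUnit
  set N : Matrix (Fin d) (Fin d) ℝ := (M X)⁻¹ with hN_def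
  have hNs : Nᵀ = N := by
    rw [hN_def, Matrix.transpose_nonsing_inv]
    congr 1
    simp [hM_def, Matrix.transpose_add, Matrix.transpose_mul, Matrix.transpose_transpose,
      Matrix.transpose_one]
  -- derivative of c
  set L1 : Matrix (Fin n) (Fin d) ℝ →L[ℝ] Matrix (Fin d) (Fin 1) ℝ :=
    LinearMap.toContinuousLinearMap
      { toFun := fun Y => Yᵀ * A
        map_add' := fun x y => by
          exact (congrArg (fun Z => Z * A) (Matrix.transpose_add x y)).trans
            (Matrix.add_mul _ _ _)
        map_smul' := fun r x => by
          exact (congrArg (fun Z => Z * A) (Matrix.transpose_smul r x)).trans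
            (Matrix.smul_mul _ _ _) } with hL1
  have hL1_apply : ∀ Y, L1 Y = Yᵀ * A := fun _ => rfl
  have hc : HasFDerivAt c L1 X := by
    have := (L1.hasFDerivAt (x := X)).sub_const B
    exact this
  -- derivative of M
  set LM : Matrix (Fin n) (Fin d) ℝ →L[ℝ] Matrix (Fin d) (Fin d) ℝ :=
    (((mulBBM d n d).deriv (Xᵀ, X)).comp
      ((transCLM n d).prod (ContinuousLinearMap.id ℝ (Matrix (Fin n) (Fin d) ℝ)))) with hLM
  have hMd : HasFDerivAt M LM X := by
    have h0 : HasFDerivAt (fun Y : Matrix (Fin n) (Fin d) ℝ => Yᵀ * Y) LM X := by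
      have ht : HasFDerivAt (fun Y : Matrix (Fin n) (Fin d) ℝ => Yᵀ) (transCLM n d) X :=
        (transCLM n d).hasFDerivAt
      have hid : HasFDerivAt (fun Y : Matrix (Fin n) (Fin d) ℝ => Y)
          (ContinuousLinearMap.id ℝ _) X := hasFDerivAt_id X
      exact hasFDerivAt_matmul ht hid
    exact h0.const_add (1 : Matrix (Fin d) (Fin d) ℝ)
  -- derivative of Y ↦ (M Y)⁻¹
  have hinv : HasFDerivAt (fun Y => (M Y)⁻¹)
      ((-(ContinuousLinearMap.mulLeftRight ℝ (Matrix (Fin d) (Fin d) ℝ) N N)).comp LM) X := by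
    have heq : (fun Y => (M Y)⁻¹) = fun Y => Ring.inverse (M Y) := by
      funext Y
      exact Matrix.nonsing_inv_eq_ringInverse _
    rw [heq]
    have hu : (↑hU.unit⁻¹ : Matrix (Fin d) (Fin d) ℝ) = N := by
      rw [Matrix.coe_units_inv, IsUnit.unit_spec]
    have := (hasFDerivAt_ringInverse (𝕜 := ℝ) hU.unit).comp X hMd
    rw [hu] at this
    exact this
  -- assemble
  have hct : HasFDerivAt (fun Y => (c Y)ᵀ) ((transCLM d 1).comp L1) X :=
    ((transCLM d 1).hasFDerivAt).comp X hc
  set Dinv := (-(ContinuousLinearMap.mulLeftRight ℝ (Matrix (Fin d) (Fin d) ℝ) N N)).comp LM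
    with hDinv
  set DG1 := (((mulBBM 1 d d).deriv ((c X)ᵀ, N)).comp (((transCLM d 1).comp L1).prod Dinv))
    with hDG1
  have hG1 : HasFDerivAt (fun Y => (c Y)ᵀ * (M Y)⁻¹) DG1 X := hasFDerivAt_matmul hct hinv
  set DG := (((mulBBM 1 d 1).deriv ((c X)ᵀ * N, c X)).comp (DG1.prod L1)) with hDG
  have hG : HasFDerivAt (fun Y => (c Y)ᵀ * (M Y)⁻¹ * c Y) DG X := hasFDerivAt_matmul hG1 hc
  have hF : HasFDerivAt (fun Y => tlsLoss a b Y) ((traceCLM 1).comp DG) X := by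
    have : (fun Y => tlsLoss a b Y)
        = fun Y => Matrix.trace ((c Y)ᵀ * (M Y)⁻¹ * c Y) := funext hloss
    rw [this]
    exact ((traceCLM 1).hasFDerivAt).comp X hG
  rw [hF.fderiv]
  -- evaluate the derivative at H
  have heval : ((traceCLM 1).comp DG) H
      = Matrix.trace ((c X)ᵀ * N * (Hᵀ * A)
          + ((c X)ᵀ * (-(N * (Xᵀ * H + Hᵀ * X) * N)) + (Hᵀ * A)ᵀ * N) * c X) := rfl
  rw [heval]
  -- pure matrix algebra from here on
  set c0 : Matrix (Fin d) (Fin 1) ℝ := c X with hc0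
  have hexp : Matrix.trace (c0ᵀ * N * (Hᵀ * A)
          + (c0ᵀ * (-(N * (Xᵀ * H + Hᵀ * X) * N)) + (Hᵀ * A)ᵀ * N) * c0)
      = Matrix.trace (c0ᵀ * N * (Hᵀ * A))
        + (Matrix.trace ((Hᵀ * A)ᵀ * N * c0)
           + Matrix.trace (c0ᵀ * (-(N * (Xᵀ * H + Hᵀ * X) * N)) * c0)) := by
    rw [Matrix.trace_add, Matrix.add_mul, Matrix.trace_add]
    ring
  rw [hexp]
  have hTtrans : ∀ (P : Matrix (Fin 1) (Fin 1) ℝ), Matrix.trace P = Matrix.trace Pᵀ :=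
    fun P => (Matrix.trace_transpose P).symm
  have t1 : Matrix.trace (c0ᵀ * N * (Hᵀ * A)) = Matrix.trace (c0ᵀ * N * Hᵀ * A) := by
    rw [Matrix.mul_assoc (c0ᵀ * N)]
  have t2 : Matrix.trace ((Hᵀ * A)ᵀ * N * c0) = Matrix.trace (c0ᵀ * N * Hᵀ * A) := by
    rw [hTtrans]
    simp only [Matrix.transpose_mul, Matrix.transpose_transpose, hNs]
    simp only [Matrix.mul_assoc]
  have t3 : Matrix.trace (c0ᵀ * (-(N * (Xᵀ * H + Hᵀ * X) * N)) * c0)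
      = -(2 * Matrix.trace (X * N * c0 * (c0ᵀ * N * Hᵀ))) := by
    have e1 : c0ᵀ * (-(N * (Xᵀ * H + Hᵀ * X) * N)) * c0
        = -(c0ᵀ * N * Xᵀ * (H * (N * c0)) + c0ᵀ * N * Hᵀ * (X * (N * c0))) := by
      simp only [Matrix.mul_add, Matrix.add_mul, Matrix.mul_neg, Matrix.neg_mul, neg_add,
        Matrix.mul_assoc]
    rw [e1]
    have e2 : Matrix.trace (c0ᵀ * N * Xᵀ * (H * (N * c0)))
        = Matrix.trace (c0ᵀ * N * Hᵀ * (X * (N * c0))) := by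
      rw [hTtrans]
      simp only [Matrix.transpose_mul, Matrix.transpose_transpose, hNs]
      try simp only [Matrix.mul_assoc]
    have e3 : Matrix.trace (c0ᵀ * N * Hᵀ * (X * (N * c0)))
        = Matrix.trace (X * N * c0 * (c0ᵀ * N * Hᵀ)) := by
      rw [Matrix.trace_mul_comm]
      simp only [Matrix.mul_assoc]
    rw [Matrix.trace_neg, Matrix.trace_add, e2, e3]
    ring
  rw [t1, t2, t3]
  -- right-hand side
  have hs : tlsScore a b X * (1 + Xᵀ * X)⁻¹ * Hᵀ
      = A * (c0ᵀ * N * Hᵀ) - X * N * (c0 * (c0ᵀ * N * Hᵀ)) := by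
    have hv : Xᵀ.mulVec a - b = fun i => c0 i 0 := by
      rw [hc0, hcol X]; funext i; simp [Matrix.replicateCol]
    have hcc : Matrix.replicateCol (Fin 1) (fun i => c0 i 0) = c0 := by
      ext i j
      simp only [Matrix.replicateCol, Matrix.of_apply]
      congr 1
      exact (Subsingleton.elim _ _)
    have hrr : Matrix.replicateRow (Fin 1) (fun i => c0 i 0) = c0ᵀ := by
      ext i j
      simp only [Matrix.replicateRow, Matrix.of_apply, Matrix.transpose_apply]
      congr 1
      exact (Subsingleton.elim _ _)
    have hvva : Matrix.vecMulVec a (Xᵀ.mulVec a - b) = A * c0ᵀ := by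
      rw [Matrix.vecMulVec_eq (Fin 1), hv, hrr, hA]
      rfl
    have hvvc : Matrix.vecMulVec (Xᵀ.mulVec a - b) (Xᵀ.mulVec a - b) = c0 * c0ᵀ := by
      rw [Matrix.vecMulVec_eq (Fin 1), hv, hcc, hrr]
      rfl
    rw [tlsScore, hvva, hvvc]
    have hMX : (1 + Xᵀ * X)⁻¹ = N := by rw [hN_def, hM_def]
    rw [hMX, Matrix.sub_mul, Matrix.sub_mul]
    simp only [Matrix.mul_assoc]
  rw [two_nsmul, Matrix.add_mul, Matrix.trace_add, hs, Matrix.trace_sub]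
  have r1 : Matrix.trace (A * (c0ᵀ * N * Hᵀ)) = Matrix.trace (c0ᵀ * N * Hᵀ * A) :=
    Matrix.trace_mul_comm _ _
  have r2 : Matrix.trace (X * N * (c0 * (c0ᵀ * N * Hᵀ)))
      = Matrix.trace (X * N * c0 * (c0ᵀ * N * Hᵀ)) := by
    simp only [Matrix.mul_assoc]
  rw [r1, r2]
  ring
end

section
/- Define s(a,b;X) = a(aᵀX − bᵀ) − X(I_d + XᵀX)^{-1}(Xᵀa − b)(aᵀX − bᵀ). If a = a₀ + ã, b = X₀ᵀa₀ + b̃ with nonrandom a₀, and the centered random vector [ã; b̃] has covariance σ²I_{n+d}, then E[s(a,b;X₀)] = 0 (s is an unbiased estimating function at the true parameter X₀). -/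
open Matrix MeasureTheory

/-- Entrywise expectation of a random matrix. -/
noncomputable def matExp {Ω : Type*} [MeasurableSpace Ω] (μ : Measure Ω) {p q : ℕ}
    (M : Ω → Matrix (Fin p) (Fin q) ℝ) : Matrix (Fin p) (Fin q) ℝ :=
  Matrix.of fun i j => ∫ ω, M ω i j ∂μ

/-- In the EIV model `a = a₀ + ã`, `b = X₀ᵀa₀ + b̃` with centered errors whose stacked
covariance is `σ²I_{n+d}`, the estimating function is unbiased: `E[s(a,b;X₀)] = 0`. -/
theorem tlsScore_unbiased {Ω : Type*} [MeasurableSpace Ω] (μ : Measure Ω)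
    [IsProbabilityMeasure μ] {n d : ℕ} (σ2 : ℝ) (hσ : 0 < σ2)
    (a0 : Fin n → ℝ) (X0 : Matrix (Fin n) (Fin d) ℝ)
    (ta : Ω → Fin n → ℝ) (tb : Ω → Fin d → ℝ)
    (hta_int : ∀ i, Integrable (fun ω => ta ω i) μ)
    (htb_int : ∀ i, Integrable (fun ω => tb ω i) μ)
    (haa_int : ∀ i j, Integrable (fun ω => ta ω i * ta ω j) μ)
    (hab_int : ∀ i j, Integrable (fun ω => ta ω i * tb ω j) μ)
    (hbb_int : ∀ i j, Integrable (fun ω => tb ω i * tb ω j) μ)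
    (hta_mean : ∀ i, ∫ ω, ta ω i ∂μ = 0)
    (htb_mean : ∀ i, ∫ ω, tb ω i ∂μ = 0)
    (haa : matExp μ (fun ω => vecMulVec (ta ω) (ta ω)) = σ2 • 1)
    (hab : matExp μ (fun ω => vecMulVec (ta ω) (tb ω)) = 0)
    (hbb : matExp μ (fun ω => vecMulVec (tb ω) (tb ω)) = σ2 • 1) :
    matExp μ (fun ω => tlsScore (a0 + ta ω) (X0ᵀ.mulVec a0 + tb ω) X0) = 0 := by
  classical
  -- scalar covariance facts
  have haa' : ∀ i j, ∫ ω, ta ω i * ta ω j ∂μ = σ2 * (1 : Matrix (Fin n) (Fin n) ℝ) i j := by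
    intro i j
    have := congrFun (congrFun haa i) j
    simpa [matExp, vecMulVec] using this
  have hab' : ∀ i j, ∫ ω, ta ω i * tb ω j ∂μ = 0 := by
    intro i j
    have := congrFun (congrFun hab i) j
    simpa [matExp, vecMulVec] using this
  have hbb' : ∀ i j, ∫ ω, tb ω i * tb ω j ∂μ = σ2 * (1 : Matrix (Fin d) (Fin d) ℝ) i j := by
    intro i j
    have := congrFun (congrFun hbb i) j
    simpa [matExp, vecMulVec] using this
  -- the residual
  set r : Ω → Fin d → ℝ := fun ω j => (∑ k, X0 k j * ta ω k) - tb ω j with hrdef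
  have hres : ∀ ω, X0ᵀ.mulVec (a0 + ta ω) - (X0ᵀ.mulVec a0 + tb ω) = r ω := by
    intro ω
    funext j
    simp [hrdef, Matrix.mulVec, dotProduct, Pi.add_apply, mul_add, Finset.sum_add_distrib,
      Matrix.transpose_apply]
  -- integrability of residual and products
  have hr_int : ∀ j, Integrable (fun ω => r ω j) μ := by
    intro j
    exact (integrable_finset_sum _ fun k _ => (hta_int k).const_mul _).sub (htb_int j)
  have har_eq : ∀ i j, (fun ω => ta ω i * r ω j)
      = fun ω => (∑ k, X0 k j * (ta ω i * ta ω k)) - ta ω i * tb ω j := by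
    intro i j
    funext ω
    simp only [hrdef, mul_sub, Finset.mul_sum]
    ring_nf
  have har_int : ∀ i j, Integrable (fun ω => ta ω i * r ω j) μ := by
    intro i j
    rw [har_eq]
    exact (integrable_finset_sum _ fun k _ => (haa_int i k).const_mul _).sub (hab_int i j)
  have hbr_eq : ∀ i j, (fun ω => tb ω i * r ω j)
      = fun ω => (∑ k, X0 k j * (ta ω k * tb ω i)) - tb ω i * tb ω j := by
    intro i j
    funext ω
    simp only [hrdef, mul_sub, Finset.mul_sum]
    ring_nf
  have hbr_int : ∀ i j, Integrable (fun ω => tb ω i * r ω j) μ := by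
    intro i j
    rw [hbr_eq]
    exact (integrable_finset_sum _ fun k _ => ((hab_int k i).const_mul _)).sub (hbb_int i j)
  have hrr_eq : ∀ i j, (fun ω => r ω i * r ω j)
      = fun ω => (∑ k, X0 k i * (ta ω k * r ω j)) - tb ω i * r ω j := by
    intro i j
    funext ω
    simp only [hrdef, sub_mul, Finset.sum_mul]
    ring_nf
    congr 1
    exact Finset.sum_congr rfl fun k _ => by ring
  have hrr_int : ∀ i j, Integrable (fun ω => r ω i * r ω j) μ := by
    intro i j
    rw [hrr_eq]
    exact (integrable_finset_sum _ fun k _ => (har_int k j).const_mul _).sub (hbr_int i j)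
  -- means
  have hr_mean : ∀ j, ∫ ω, r ω j ∂μ = 0 := by
    intro j
    rw [hrdef]
    rw [integral_sub (integrable_finset_sum _ fun k _ => (hta_int k).const_mul _) (htb_int j),
      integral_finset_sum _ fun k _ => (hta_int k).const_mul _]
    simp [integral_const_mul, hta_mean, htb_mean]
  have har_mean : ∀ i j, ∫ ω, ta ω i * r ω j ∂μ = σ2 * X0 i j := by
    intro i j
    rw [har_eq]
    rw [integral_sub (integrable_finset_sum _ fun k _ => (haa_int i k).const_mul _) (hab_int i j),
      integral_finset_sum _ fun k _ => (haa_int i k).const_mul _]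
    simp only [integral_const_mul, haa', hab', sub_zero]
    simp [Matrix.one_apply, mul_comm]
  have hbr_mean : ∀ i j, ∫ ω, tb ω i * r ω j ∂μ = -(σ2 * (1 : Matrix (Fin d) (Fin d) ℝ) i j) := by
    intro i j
    rw [hbr_eq]
    rw [integral_sub (integrable_finset_sum _ fun k _ => ((hab_int k i).const_mul _)) (hbb_int i j),
      integral_finset_sum _ fun k _ => ((hab_int k i).const_mul _)]
    simp [integral_const_mul, hab', hbb']
  have hrr_mean : ∀ i j, ∫ ω, r ω i * r ω j ∂μ
      = σ2 * ((1 : Matrix (Fin d) (Fin d) ℝ) + X0ᵀ * X0) i j := by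
    intro i j
    rw [hrr_eq]
    rw [integral_sub (integrable_finset_sum _ fun k _ => (har_int k j).const_mul _) (hbr_int i j),
      integral_finset_sum _ fun k _ => (har_int k j).const_mul _]
    simp only [integral_const_mul, har_mean, hbr_mean, sub_neg_eq_add]
    simp only [Matrix.add_apply, Matrix.mul_apply, Matrix.transpose_apply]
    rw [mul_add, Finset.mul_sum, add_comm]
    congr 1
    exact Finset.sum_congr rfl fun k _ => by ring
  -- invertibility of 1 + X0ᵀ X0
  have hpos : ((1 : Matrix (Fin d) (Fin d) ℝ) + X0ᵀ * X0).PosDef := by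
    have h1 : ((1 : Matrix (Fin d) (Fin d) ℝ)).PosDef := Matrix.PosDef.one
    have h2 : (X0ᵀ * X0).PosSemidef := by
      simpa using Matrix.posSemidef_conjTranspose_mul_self X0
    exact h1.add_posSemidef h2
  have hinv : ((1 : Matrix (Fin d) (Fin d) ℝ) + X0ᵀ * X0)⁻¹ *
      ((1 : Matrix (Fin d) (Fin d) ℝ) + X0ᵀ * X0) = 1 :=
    Matrix.nonsing_inv_mul _ ((Matrix.isUnit_iff_isUnit_det _).mp hpos.isUnit)
  set C : Matrix (Fin n) (Fin d) ℝ := X0 * ((1 : Matrix (Fin d) (Fin d) ℝ) + X0ᵀ * X0)⁻¹ with hCdef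
  have hCmul : C * (σ2 • ((1 : Matrix (Fin d) (Fin d) ℝ) + X0ᵀ * X0)) = σ2 • X0 := by
    rw [Matrix.mul_smul, hCdef, Matrix.mul_assoc, hinv, Matrix.mul_one]
  -- now compute entrywise
  ext i j
  simp only [matExp, Matrix.of_apply, Matrix.zero_apply]
  have hent : ∀ ω, tlsScore (a0 + ta ω) (X0ᵀ.mulVec a0 + tb ω) X0 i j
      = (a0 i * r ω j + ta ω i * r ω j) - ∑ k, C i k * (r ω k * r ω j) := by
    intro ω
    simp only [tlsScore]
    rw [hres]
    simp only [Matrix.sub_apply, vecMulVec_apply, Pi.add_apply, Matrix.mul_apply, hCdef]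
    rw [add_mul]
  rw [integral_congr_ae (Filter.Eventually.of_forall hent)]
  have hint1 : Integrable (fun ω => a0 i * r ω j + ta ω i * r ω j) μ :=
    ((hr_int j).const_mul _).add (har_int i j)
  have hint2 : Integrable (fun ω => ∑ k, C i k * (r ω k * r ω j)) μ :=
    integrable_finset_sum _ fun k _ => (hrr_int k j).const_mul _
  rw [integral_sub hint1 hint2,
    integral_add ((hr_int j).const_mul _) (har_int i j),
    integral_finset_sum _ fun k _ => (hrr_int k j).const_mul _]
  simp only [integral_const_mul, hr_mean, har_mean, hrr_mean, mul_zero, zero_add]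
  have : ∑ k, C i k * (σ2 * ((1 : Matrix (Fin d) (Fin d) ℝ) + X0ᵀ * X0) k j)
      = (C * (σ2 • ((1 : Matrix (Fin d) (Fin d) ℝ) + X0ᵀ * X0))) i j := by
    simp only [Matrix.mul_apply, Matrix.smul_apply, smul_eq_mul]
  rw [this, hCmul]
  simp
end

section
/- With a = a₀ + ã, b = X₀ᵀa₀ + b̃, b₀ = X₀ᵀa₀, the estimating function admits the decomposition s(a,b;X₀) = W₁X₀ − W₂ + W₃X₀ − W₄ − X₀(I_d + X₀ᵀX₀)^{-1}(X₀ᵀW₃X₀ − X₀ᵀW₄ − W₄ᵀX₀ + W₅), where W₁ = a₀ãᵀ, W₂ = a₀b̃ᵀ, W₃ = ããᵀ − σ²I_n, W₄ = ãb̃ᵀ, W₅ = b̃b̃ᵀ − σ²I_d. -/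
open Matrix

section aux

variable {m n p : Type*} [Fintype m] [Fintype n] [Fintype p]

lemma vmv_add_left (u v : m → ℝ) (w : n → ℝ) :
    vecMulVec (u + v) w = vecMulVec u w + vecMulVec v w := by
  ext i j; simp [vecMulVec_apply, add_mul]

lemma vmv_sub_left (u v : m → ℝ) (w : n → ℝ) :
    vecMulVec (u - v) w = vecMulVec u w - vecMulVec v w := by
  ext i j; simp [vecMulVec_apply, sub_mul]

lemma vmv_sub_right (u : m → ℝ) (v w : n → ℝ) :
    vecMulVec u (v - w) = vecMulVec u v - vecMulVec u w := by
  ext i j; simp [vecMulVec_apply, mul_sub]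

lemma mul_vmv (X : Matrix m n ℝ) (u : n → ℝ) (v : p → ℝ) :
    X * vecMulVec u v = vecMulVec (X.mulVec u) v := by
  ext i j; simp [vecMulVec_apply, mul_apply, mulVec, dotProduct, Finset.sum_mul, mul_assoc]

lemma vmv_mul (u : m → ℝ) (v : n → ℝ) (X : Matrix n p ℝ) :
    vecMulVec u v * X = vecMulVec u (Xᵀ.mulVec v) := by
  ext i j; simp only [vecMulVec_apply, mul_apply, mulVec, dotProduct, Finset.mul_sum]
  exact Finset.sum_congr rfl fun k _ => by rw [Matrix.transpose_apply]; ring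

lemma vmv_transpose (u : m → ℝ) (v : n → ℝ) :
    (vecMulVec u v)ᵀ = vecMulVec v u := by
  ext i j; simp [vecMulVec_apply, mul_comm]

end aux

/-- With `a = a₀ + ã`, `b = X₀ᵀa₀ + b̃`, the estimating function decomposes as
`s(a,b;X₀) = W₁X₀ − W₂ + W₃X₀ − W₄ − X₀(I + X₀ᵀX₀)⁻¹(X₀ᵀW₃X₀ − X₀ᵀW₄ − W₄ᵀX₀ + W₅)`,
where `W₁ = a₀ãᵀ`, `W₂ = a₀b̃ᵀ`, `W₃ = ããᵀ − σ²I_n`, `W₄ = ãb̃ᵀ`, `W₅ = b̃b̃ᵀ − σ²I_d`. -/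
theorem tlsScore_decomposition {n d : ℕ} (σ2 : ℝ) (X0 : Matrix (Fin n) (Fin d) ℝ)
    (a0 ta : Fin n → ℝ) (tb : Fin d → ℝ) :
    tlsScore (a0 + ta) (X0ᵀ.mulVec a0 + tb) X0 =
      (vecMulVec a0 ta) * X0 - vecMulVec a0 tb +
      (vecMulVec ta ta - σ2 • 1) * X0 - vecMulVec ta tb -
      X0 * (1 + X0ᵀ * X0)⁻¹ *
        (X0ᵀ * (vecMulVec ta ta - σ2 • 1) * X0 - X0ᵀ * vecMulVec ta tb -
          (vecMulVec ta tb)ᵀ * X0 + (vecMulVec tb tb - σ2 • 1)) := by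
  have hpd : (1 + X0ᵀ * X0).PosDef := by
    have h1 : (1 : Matrix (Fin d) (Fin d) ℝ).PosDef := Matrix.PosDef.one
    have h2 : (X0ᵀ * X0).PosSemidef := by
      simpa using Matrix.posSemidef_conjTranspose_mul_self X0
    exact h1.add_posSemidef h2
  have hinv : (1 + X0ᵀ * X0)⁻¹ * (1 + X0ᵀ * X0) = 1 :=
    Matrix.nonsing_inv_mul _ (Matrix.isUnit_iff_isUnit_det _ |>.1 hpd.isUnit)
  have hX : X0 * (1 + X0ᵀ * X0)⁻¹ * (X0ᵀ * X0) = X0 - X0 * (1 + X0ᵀ * X0)⁻¹ := by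
    have hM : (1 + X0ᵀ * X0)⁻¹ * (X0ᵀ * X0) = 1 - (1 + X0ᵀ * X0)⁻¹ := by
      have h := hinv
      rw [Matrix.mul_add, Matrix.mul_one] at h
      linear_combination (norm := noncomm_ring) h
    rw [Matrix.mul_assoc, hM, Matrix.mul_sub, Matrix.mul_one]
  have hw : X0ᵀ.mulVec (a0 + ta) - (X0ᵀ.mulVec a0 + tb) = X0ᵀ.mulVec ta - tb := by
    rw [Matrix.mulVec_add]; abel
  rw [tlsScore, hw]
  simp only [vmv_sub_right, vmv_add_left, vmv_sub_left, vmv_mul, vmv_transpose, mul_vmv,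
    Matrix.mulVec_mulVec, Matrix.mul_sub, Matrix.mul_add, Matrix.sub_mul, Matrix.add_mul,
    Matrix.smul_mul, Matrix.mul_smul, Matrix.mul_one, Matrix.one_mul]
  rw [hX, smul_sub]
  abel
end

section
/- Suppose X̂_m → X₀ in probability, Δ̂_m = √m(X̂_m − X₀) satisfies V_A Δ̂_m = −y_m/√m + r_m with ‖r_m‖ ≤ ‖Δ̂_m‖·ε_m where ε_m → 0 in probability, V_A is a fixed invertible matrix, and y_m/√m converges in distribution. Then Δ̂_m is stochastically bounded (O_p(1)) and √m(X̂_m − X₀) converges in distribution to V_A^{-1}·L, where L is the distributional limit of −y_m/√m. -/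
open Matrix MeasureTheory Filter

attribute [local instance] Matrix.frobeniusNormedAddCommGroup Matrix.frobeniusNormedSpace

noncomputable instance matMeasurableSpace {n d : ℕ} :
    MeasurableSpace (Matrix (Fin n) (Fin d) ℝ) :=
  inferInstanceAs (MeasurableSpace (Fin n → Fin d → ℝ))



theorem aux_meas_le {Ω : Type*} [MeasurableSpace Ω] {μ : Measure Ω} [IsFiniteMeasure μ]
    {h : Ω → ℝ} (hint : Integrable h μ) (h0 : ∀ ω, 0 ≤ h ω) {A : Set Ω}
    (hA : ∀ ω ∈ A, 1 ≤ h ω) : μ A ≤ ENNReal.ofReal (∫ ω, h ω ∂μ) := by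
  have h1 : μ A ≤ μ {ω | 1 ≤ h ω} := measure_mono hA
  have h2 := mul_meas_ge_le_integral_of_nonneg (ae_of_all _ h0) hint 1
  have h3 : (μ {ω | 1 ≤ h ω}).toReal ≤ ∫ ω, h ω ∂μ := by simp at h2; exact h2
  calc μ A ≤ μ {ω | 1 ≤ h ω} := h1
    _ = ENNReal.ofReal (μ {ω | 1 ≤ h ω}).toReal :=
        (ENNReal.ofReal_toReal (measure_ne_top _ _)).symm
    _ ≤ ENNReal.ofReal (∫ ω, h ω ∂μ) := ENNReal.ofReal_le_ofReal h3

theorem aux_integral_le {Ω : Type*} [MeasurableSpace Ω] {μ : Measure Ω} [IsProbabilityMeasure μ]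
    {h : Ω → ℝ} {B η : ℝ} (hint : Integrable h μ) (h0 : ∀ ω, 0 ≤ h ω)
    (hB : ∀ ω, h ω ≤ B) (hη : 0 ≤ η) (hB0 : 0 ≤ B) {A : Set Ω}
    (hA : ∀ ω, ω ∉ A → h ω ≤ η) : ∫ ω, h ω ∂μ ≤ η + B * (μ A).toReal := by
  have hm := hint.aestronglyMeasurable
  set h' := hm.mk h with hh'
  have he : h =ᵐ[μ] h' := hm.ae_eq_mk
  have hm' : StronglyMeasurable h' := hm.stronglyMeasurable_mk
  have Smeas : MeasurableSet {ω | η < h' ω} := hm'.measurable measurableSet_Ioi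
  set S := {ω | η < h' ω} with hS
  have bound1 : ∀ᵐ ω ∂μ, h ω ≤ η + S.indicator (fun _ => B) ω := by
    filter_upwards [he] with ω hω
    by_cases hc : η < h' ω
    · have : S.indicator (fun _ => B) ω = B := Set.indicator_of_mem (show ω ∈ S from hc) _
      rw [this]; exact le_add_of_nonneg_of_le hη (hB ω)
    · have : S.indicator (fun _ => B) ω = 0 := Set.indicator_of_notMem (show ω ∉ S from hc) _
      rw [this, add_zero, hω]; exact not_lt.mp hc
  have hintR : Integrable (fun ω => η + S.indicator (fun _ => B) ω) μ :=
    (integrable_const η).add ((integrable_const B).indicator Smeas)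
  have step1 : ∫ ω, h ω ∂μ ≤ ∫ ω, (η + S.indicator (fun _ => B) ω) ∂μ :=
    integral_mono_ae hint hintR bound1
  have step2 : ∫ ω, (η + S.indicator (fun _ => B) ω) ∂μ = η + B * (μ S).toReal := by
    rw [integral_add (integrable_const η) ((integrable_const B).indicator Smeas),
      integral_const, integral_indicator_const _ Smeas]
    simp [mul_comm]
    exact Or.inl rfl
  have hSA : μ S ≤ μ A := by
    have hsub : S ⊆ A ∪ {ω | h ω ≠ h' ω} := by
      intro ω hω
      by_cases hc : h ω = h' ω
      · left
        by_contra hnA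
        exact absurd (hc ▸ hω : η < h ω) (not_lt.mpr (hA ω hnA))
      · right; exact hc
    have hnull : μ {ω | h ω ≠ h' ω} = 0 := by
      simpa [Filter.EventuallyEq, ae_iff] using he
    calc μ S ≤ μ (A ∪ {ω | h ω ≠ h' ω}) := measure_mono hsub
      _ ≤ μ A + μ {ω | h ω ≠ h' ω} := measure_union_le _ _
      _ = μ A := by rw [hnull, add_zero]
  have : B * (μ S).toReal ≤ B * (μ A).toReal :=
    mul_le_mul_of_nonneg_left (ENNReal.toReal_mono (measure_ne_top _ _) hSA) hB0
  linarith [step1, step2]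


noncomputable def cutoff {E : Type*} [SeminormedAddCommGroup E] (C : ℝ) :
    BoundedContinuousFunction E ℝ :=
  BoundedContinuousFunction.mkOfBound
    ⟨fun x => max 0 (min 1 (‖x‖ - C + 1)), by
      apply Continuous.max continuous_const
      exact Continuous.min continuous_const (by continuity)⟩ 2
    (by
      intro x y
      simp only [ContinuousMap.coe_mk, Real.dist_eq]
      have h1 : ∀ z : E, 0 ≤ max 0 (min 1 (‖z‖ - C + 1)) := fun z => le_max_left _ _
      have h2 : ∀ z : E, max 0 (min 1 (‖z‖ - C + 1)) ≤ 1 := fun z =>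
        max_le zero_le_one (min_le_left _ _)
      rw [abs_sub_le_iff]
      constructor <;> linarith [h1 x, h2 x, h1 y, h2 y])

theorem cutoff_apply {E : Type*} [SeminormedAddCommGroup E] (C : ℝ) (x : E) :
    cutoff C x = max 0 (min 1 (‖x‖ - C + 1)) := rfl

theorem cutoff_nonneg {E : Type*} [SeminormedAddCommGroup E] (C : ℝ) (x : E) :
    0 ≤ cutoff C x := le_max_left _ _

theorem cutoff_le_one {E : Type*} [SeminormedAddCommGroup E] (C : ℝ) (x : E) :
    cutoff C x ≤ 1 := max_le zero_le_one (min_le_left _ _)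

theorem cutoff_eq_one {E : Type*} [SeminormedAddCommGroup E] {C : ℝ} {x : E}
    (h : C ≤ ‖x‖) : cutoff C x = 1 := by
  have h1 : (1 : ℝ) ≤ ‖x‖ - C + 1 := by linarith
  rw [cutoff_apply, min_eq_left h1, max_eq_right zero_le_one]

theorem cutoff_le_indicator {E : Type*} [SeminormedAddCommGroup E] (C : ℝ) (x : E) :
    cutoff C x ≤ ({z : E | C - 1 ≤ ‖z‖}).indicator (fun _ => (1 : ℝ)) x := by
  by_cases h : C - 1 ≤ ‖x‖
  · rw [Set.indicator_of_mem (show x ∈ {z : E | C - 1 ≤ ‖z‖} from h)]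
    exact cutoff_le_one C x
  · rw [Set.indicator_of_notMem (show x ∉ {z : E | C - 1 ≤ ‖z‖} from h)]
    push_neg at h
    have h2 : ‖x‖ - C + 1 ≤ 0 := by linarith
    rw [cutoff_apply, min_eq_right (h2.trans zero_le_one), max_eq_left h2]

theorem aux_combine {P : ℝ → ℕ → Prop}
    (mono : ∀ C C' m, C ≤ C' → P C m → P C' m)
    (hsmall : ∀ m, ∃ C, P C m) :
    ∀ M, (∃ C, ∀ m, M ≤ m → P C m) → ∃ C, ∀ m, P C m := by
  intro M
  induction M with
  | zero => exact fun ⟨C, hC⟩ => ⟨C, fun m => hC m (Nat.zero_le m)⟩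
  | succ M ih =>
    rintro ⟨C, hC⟩
    obtain ⟨C', hC'⟩ := hsmall M
    apply ih
    refine ⟨max C C', fun m hm => ?_⟩
    rcases eq_or_lt_of_le hm with h | h
    · exact mono C' _ m (le_max_right _ _) (h ▸ hC')
    · exact mono C _ m (le_max_left _ _) (hC m h)


/-- Slutsky-type argument for the TLS estimator: if `X̂_m → X₀` in probability,
`Δ̂_m = √m(X̂_m − X₀)` satisfies `V_A Δ̂_m = −y_m/√m + r_m` with
`‖r_m‖ ≤ ‖Δ̂_m‖·ε_m`, `ε_m → 0` in probability, `V_A` invertible, and `−y_m/√m`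
converges in distribution (to a law `ν`), then `Δ̂_m = O_p(1)` and
`√m(X̂_m − X₀)` converges in distribution to `V_A⁻¹·L` where `L ∼ ν`. -/
theorem slutsky_tls {Ω : Type*} [MeasurableSpace Ω] (μ : Measure Ω)
    [IsProbabilityMeasure μ] {n d : ℕ}
    (VA : Matrix (Fin n) (Fin n) ℝ) (hVA : VA.det ≠ 0)
    (Xhat : ℕ → Ω → Matrix (Fin n) (Fin d) ℝ) (X0 : Matrix (Fin n) (Fin d) ℝ)
    (Δ y r : ℕ → Ω → Matrix (Fin n) (Fin d) ℝ) (em : ℕ → Ω → ℝ)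
    (hΔmeas : ∀ m, AEStronglyMeasurable (Δ m) μ)
    (hΔ : ∀ m ω, Δ m ω = (Real.sqrt m) • (Xhat m ω - X0))
    (hconsist : ∀ ε > (0 : ℝ),
      Tendsto (fun m => μ {ω | ε ≤ ‖Xhat m ω - X0‖}) atTop (nhds 0))
    (heq : ∀ m ω, VA * Δ m ω = -((Real.sqrt m)⁻¹ • y m ω) + r m ω)
    (hr : ∀ m ω, ‖r m ω‖ ≤ ‖Δ m ω‖ * em m ω)
    (hem : ∀ ε > (0 : ℝ),
      Tendsto (fun m => μ {ω | ε ≤ |em m ω|}) atTop (nhds 0))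
    (ν : Measure (Matrix (Fin n) (Fin d) ℝ)) [IsProbabilityMeasure ν]
    (hydist : ∀ f : BoundedContinuousFunction (Matrix (Fin n) (Fin d) ℝ) ℝ,
      Tendsto (fun m : ℕ => ∫ ω, f (-((Real.sqrt m)⁻¹ • y m ω)) ∂μ) atTop
        (nhds (∫ x, f x ∂ν))) :
    (∀ ε > (0 : ℝ), ∃ C : ℝ, ∀ m, μ {ω | C < ‖Δ m ω‖} ≤ ENNReal.ofReal ε) ∧
    (∀ f : BoundedContinuousFunction (Matrix (Fin n) (Fin d) ℝ) ℝ,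
      Tendsto (fun m => ∫ ω, f (Δ m ω) ∂μ) atTop
        (nhds (∫ x, f (VA⁻¹ * x) ∂ν))) := by
  haveI : BorelSpace (Matrix (Fin n) (Fin d) ℝ) :=
    ⟨(inferInstance : BorelSpace (Fin n → Fin d → ℝ)).measurable_eq⟩
  haveI : @BorelSpace (Matrix (Fin n) (Fin d) ℝ) PseudoMetricSpace.toUniformSpace.toTopologicalSpace _ :=
    ⟨(inferInstance : BorelSpace (Fin n → Fin d → ℝ)).measurable_eq⟩
  haveI : ProperSpace (Matrix (Fin n) (Fin d) ℝ) := FiniteDimensional.proper ℝ _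
  -- notation
  obtain ⟨s, hs⟩ : ∃ s : ℕ → Ω → Matrix (Fin n) (Fin d) ℝ,
      ∀ m ω, s m ω = -((Real.sqrt m)⁻¹ • y m ω) := ⟨_, fun _ _ => rfl⟩
  have hydist' : ∀ f : BoundedContinuousFunction (Matrix (Fin n) (Fin d) ℝ) ℝ,
      Tendsto (fun m : ℕ => ∫ ω, f (s m ω) ∂μ) atTop (nhds (∫ x, f x ∂ν)) := by
    intro f
    have := hydist f
    simp only [← hs] at this
    exact this
  obtain ⟨c, hc0, hVAinv⟩ : ∃ c : ℝ, 0 < c ∧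
      ∀ M : Matrix (Fin n) (Fin d) ℝ, ‖VA⁻¹ * M‖ ≤ c * ‖M‖ := by
    refine ⟨‖VA⁻¹‖ + 1, by positivity, fun M => ?_⟩
    refine (Matrix.frobenius_norm_mul VA⁻¹ M).trans ?_
    have := norm_nonneg M
    nlinarith [norm_nonneg (VA⁻¹)]
  have hΔdecomp : ∀ m ω, Δ m ω = VA⁻¹ * s m ω + VA⁻¹ * r m ω := by
    intro m ω
    rw [← Matrix.mul_add, hs]
    rw [← heq, ← Matrix.mul_assoc, Matrix.nonsing_inv_mul VA (isUnit_iff_ne_zero.mpr hVA), Matrix.one_mul]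
  have hrabs : ∀ m ω, ‖r m ω‖ ≤ ‖Δ m ω‖ * |em m ω| := by
    intro m ω
    exact (hr m ω).trans (mul_le_mul_of_nonneg_left (le_abs_self _) (norm_nonneg _))
  have hkey : ∀ m ω, c * |em m ω| ≤ 1/2 → ‖Δ m ω‖ ≤ 2 * c * ‖s m ω‖ := by
    intro m ω h
    have e1 : ‖Δ m ω‖ ≤ c * ‖s m ω‖ + c * (‖Δ m ω‖ * |em m ω|) := by
      calc ‖Δ m ω‖ = ‖VA⁻¹ * s m ω + VA⁻¹ * r m ω‖ := by rw [← hΔdecomp]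
        _ ≤ ‖VA⁻¹ * s m ω‖ + ‖VA⁻¹ * r m ω‖ := norm_add_le _ _
        _ ≤ c * ‖s m ω‖ + c * ‖r m ω‖ := add_le_add (hVAinv _) (hVAinv _)
        _ ≤ c * ‖s m ω‖ + c * (‖Δ m ω‖ * |em m ω|) := by
            have := hrabs m ω
            nlinarith
    have e2 : c * |em m ω| * ‖Δ m ω‖ ≤ (1/2) * ‖Δ m ω‖ :=
      mul_le_mul_of_nonneg_right h (norm_nonneg _)
    have e3 : c * (‖Δ m ω‖ * |em m ω|) = c * |em m ω| * ‖Δ m ω‖ := by ring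
    nlinarith [norm_nonneg (s m ω)]
  have hdiffbound : ∀ m ω, c * |em m ω| ≤ 1/2 →
      ‖Δ m ω - VA⁻¹ * s m ω‖ ≤ 2 * c * c * ‖s m ω‖ * |em m ω| := by
    intro m ω h
    have e0 : Δ m ω - VA⁻¹ * s m ω = VA⁻¹ * r m ω := by
      rw [hΔdecomp m ω]; abel
    rw [e0]
    calc ‖VA⁻¹ * r m ω‖ ≤ c * ‖r m ω‖ := hVAinv _
      _ ≤ c * (‖Δ m ω‖ * |em m ω|) := by
          have := hrabs m ω; nlinarith
      _ ≤ 2 * c * c * ‖s m ω‖ * |em m ω| := by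
          have h1 := hkey m ω h
          have h2 : ‖Δ m ω‖ * |em m ω| ≤ 2 * c * ‖s m ω‖ * |em m ω| :=
            mul_le_mul_of_nonneg_right h1 (abs_nonneg _)
          have h3 : c * (‖Δ m ω‖ * |em m ω|) ≤ c * (2 * c * ‖s m ω‖ * |em m ω|) :=
            mul_le_mul_of_nonneg_left h2 hc0.le
          nlinarith [h3]
  -- eventual integrability of BCFs of s
  have hsint : ∀ φ : BoundedContinuousFunction (Matrix (Fin n) (Fin d) ℝ) ℝ,
      ∀ᶠ m in atTop, Integrable (fun ω => φ (s m ω)) μ := by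
    intro φ
    have hsum := (hydist' φ).add (hydist' ((1 : BoundedContinuousFunction (Matrix (Fin n) (Fin d) ℝ) ℝ) - φ))
    have hlim : (∫ x, φ x ∂ν) + ∫ x, ((1 : BoundedContinuousFunction (Matrix (Fin n) (Fin d) ℝ) ℝ) - φ) x ∂ν
        = 1 := by
      rw [← integral_add (φ.integrable ν)
        (((1 : BoundedContinuousFunction (Matrix (Fin n) (Fin d) ℝ) ℝ) - φ).integrable ν)]
      simp
    rw [hlim] at hsum
    have hev : ∀ᶠ m in atTop,
        (1:ℝ)/2 < (∫ ω, φ (s m ω) ∂μ) +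
          ∫ ω, ((1 : BoundedContinuousFunction (Matrix (Fin n) (Fin d) ℝ) ℝ) - φ) (s m ω) ∂μ :=
      hsum.eventually (eventually_gt_nhds (by norm_num))
    filter_upwards [hev] with m hm
    by_contra hni
    have hz1 : ∫ ω, φ (s m ω) ∂μ = 0 := integral_undef hni
    have hni2 : ¬ Integrable (fun ω => ((1 : BoundedContinuousFunction (Matrix (Fin n) (Fin d) ℝ) ℝ) - φ) (s m ω)) μ := by
      intro hI
      apply hni
      have heq2 : (fun ω => φ (s m ω))
          = fun ω => 1 - ((1 : BoundedContinuousFunction (Matrix (Fin n) (Fin d) ℝ) ℝ) - φ) (s m ω) := by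
        funext ω; simp
      rw [heq2]
      exact (integrable_const 1).sub hI
    have hz2 : ∫ ω, ((1 : BoundedContinuousFunction (Matrix (Fin n) (Fin d) ℝ) ℝ) - φ) (s m ω) ∂μ = 0 :=
      integral_undef hni2
    rw [hz1, hz2] at hm
    norm_num at hm
  
  -- a.e./tail control for ν via cutoff functions
  have htail : ∀ ρ : ℝ, 0 < ρ → ∃ C : ℝ, 1 ≤ C ∧
      ∫ x, cutoff C x ∂ν ≤ ρ := by
    intro ρ hρ
    have hsets : ∀ k : ℕ, MeasurableSet {x : Matrix (Fin n) (Fin d) ℝ | (k:ℝ) ≤ ‖x‖} :=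
      fun k => measurableSet_le measurable_const measurable_norm
    have hanti : Antitone (fun k : ℕ => {x : Matrix (Fin n) (Fin d) ℝ | (k:ℝ) ≤ ‖x‖}) := by
      intro k k' hk x hx
      simp only [Set.mem_setOf_eq] at hx ⊢
      exact le_trans (by exact_mod_cast hk) hx
    have hempty : (⋂ k : ℕ, {x : Matrix (Fin n) (Fin d) ℝ | (k:ℝ) ≤ ‖x‖}) = ∅ := by
      ext x
      simp only [Set.mem_iInter, Set.mem_setOf_eq, Set.mem_empty_iff_false, iff_false, not_forall]
      obtain ⟨k, hk⟩ := exists_nat_gt ‖x‖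
      exact ⟨k, not_le.mpr hk⟩
    have htendsto := tendsto_measure_iInter_atTop
      (μ := ν) (fun k => (hsets k).nullMeasurableSet) hanti ⟨0, measure_ne_top _ _⟩
    rw [hempty, measure_empty] at htendsto
    have hev : ∀ᶠ k : ℕ in atTop,
        ν {x : Matrix (Fin n) (Fin d) ℝ | (k:ℝ) ≤ ‖x‖} < ENNReal.ofReal ρ :=
      htendsto.eventually_lt_const (by simp [ENNReal.ofReal_pos, hρ])
    obtain ⟨k, hk⟩ := hev.exists
    refine ⟨(k:ℝ) + 1, by linarith [Nat.cast_nonneg (α := ℝ) k], ?_⟩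
    have hseteq : {z : Matrix (Fin n) (Fin d) ℝ | (k:ℝ) + 1 - 1 ≤ ‖z‖}
        = {x : Matrix (Fin n) (Fin d) ℝ | (k:ℝ) ≤ ‖x‖} := by
      ext z; simp
    have hmono : ∫ x, cutoff ((k:ℝ)+1) x ∂ν ≤
        ∫ x, ({x : Matrix (Fin n) (Fin d) ℝ | (k:ℝ) ≤ ‖x‖}).indicator
          (fun _ => (1:ℝ)) x ∂ν := by
      refine integral_mono ((cutoff _).integrable ν)
        ((integrable_const (1:ℝ)).indicator (hsets k)) (fun x => ?_)
      have := cutoff_le_indicator ((k:ℝ)+1) x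
      rwa [hseteq] at this
    rw [integral_indicator_const _ (hsets k)] at hmono
    refine hmono.trans ?_
    simp only [smul_eq_mul, mul_one]
    exact (ENNReal.toReal_le_of_le_ofReal hρ.le hk.le)
  -- Markov for the tail of s
  have hmarkov : ∀ (C : ℝ) (m : ℕ), Integrable (fun ω => cutoff C (s m ω)) μ →
      μ {ω | C ≤ ‖s m ω‖} ≤ ENNReal.ofReal (∫ ω, cutoff C (s m ω) ∂μ) := by
    intro C m hint
    exact aux_meas_le hint (fun ω => cutoff_nonneg _ _)
      (fun ω hω => (cutoff_eq_one hω).ge)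
  constructor
  · -- Part 1 : tightness of Δ
    intro ε hε
    obtain ⟨C1, hC1ge, hC1tail⟩ := htail (ε/4) (by linarith)
    have hev1 := hsint (cutoff C1)
    have hev2 : ∀ᶠ m in atTop, ∫ ω, cutoff C1 (s m ω) ∂μ < ε/2 :=
      (hydist' (cutoff C1)).eventually_lt_const (lt_of_le_of_lt hC1tail (by linarith))
    have hθ0 : (0:ℝ) < 1/(2*c) := by positivity
    have hev3 : ∀ᶠ m in atTop, μ {ω | 1/(2*c) ≤ |em m ω|} < ENNReal.ofReal (ε/2) :=
      (hem _ hθ0).eventually_lt_const (by simp [ENNReal.ofReal_pos]; linarith)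
    have hbig : ∀ᶠ m in atTop, μ {ω | 2*c*C1 < ‖Δ m ω‖} ≤ ENNReal.ofReal ε := by
      filter_upwards [hev1, hev2, hev3] with m h1 h2 h3
      have hsub : {ω | 2*c*C1 < ‖Δ m ω‖} ⊆
          {ω | 1/(2*c) ≤ |em m ω|} ∪ {ω | C1 ≤ ‖s m ω‖} := by
        intro ω hω
        by_contra hn
        simp only [Set.mem_union, Set.mem_setOf_eq, not_or, not_le] at hn
        obtain ⟨hn1, hn2⟩ := hn
        have hcc : c * |em m ω| ≤ 1/2 := by
          have h5 : c * |em m ω| < c * (1/(2*c)) := mul_lt_mul_of_pos_left hn1 hc0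
          have h8 : c * (1/(2*c)) = 1/2 := by field_simp
          linarith
        have hk := hkey m ω hcc
        have : 2*c*‖s m ω‖ < 2*c*C1 := by
          have := mul_lt_mul_of_pos_left hn2 (show (0:ℝ) < 2*c by linarith)
          linarith [this]
        have hω' : 2*c*C1 < ‖Δ m ω‖ := hω
        linarith
      calc μ {ω | 2*c*C1 < ‖Δ m ω‖}
          ≤ μ ({ω | 1/(2*c) ≤ |em m ω|} ∪ {ω | C1 ≤ ‖s m ω‖}) := measure_mono hsub
        _ ≤ μ {ω | 1/(2*c) ≤ |em m ω|} + μ {ω | C1 ≤ ‖s m ω‖} := measure_union_le _ _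
        _ ≤ ENNReal.ofReal (ε/2) + ENNReal.ofReal (ε/2) := by
            refine add_le_add h3.le ((hmarkov C1 m h1).trans ?_)
            exact ENNReal.ofReal_le_ofReal h2.le
        _ = ENNReal.ofReal ε := by
            rw [← ENNReal.ofReal_add (by linarith) (by linarith)]
            norm_num
    obtain ⟨M, hM⟩ := eventually_atTop.mp hbig
    refine aux_combine ?_ ?_ M ⟨2*c*C1, hM⟩
    · intro C C' m hCC' hP
      refine le_trans (measure_mono ?_) hP
      intro ω hω
      exact lt_of_le_of_lt hCC' hω
    · intro m
      have hnorm : AEMeasurable (fun ω => ‖Δ m ω‖) μ := (hΔmeas m).norm.aemeasurable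
      have hsets : ∀ k : ℕ, NullMeasurableSet {ω | (k:ℝ) < ‖Δ m ω‖} μ :=
        fun k => hnorm.nullMeasurable measurableSet_Ioi
      have hanti : Antitone (fun k : ℕ => {ω | (k:ℝ) < ‖Δ m ω‖}) := by
        intro k k' hk ω hω
        simp only [Set.mem_setOf_eq] at hω ⊢
        exact lt_of_le_of_lt (by exact_mod_cast hk) hω
      have hempty : (⋂ k : ℕ, {ω | (k:ℝ) < ‖Δ m ω‖}) = ∅ := by
        ext ω
        simp only [Set.mem_iInter, Set.mem_setOf_eq, Set.mem_empty_iff_false, iff_false,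
          not_forall]
        obtain ⟨k, hk⟩ := exists_nat_gt ‖Δ m ω‖
        exact ⟨k, not_lt.mpr hk.le⟩
      have htendsto := tendsto_measure_iInter_atTop (μ := μ) hsets hanti ⟨0, measure_ne_top _ _⟩
      rw [hempty, measure_empty] at htendsto
      have hev : ∀ᶠ k : ℕ in atTop, μ {ω | (k:ℝ) < ‖Δ m ω‖} < ENNReal.ofReal ε :=
        htendsto.eventually_lt_const (by simp [ENNReal.ofReal_pos, hε])
      obtain ⟨k, hk⟩ := hev.exists
      exact ⟨(k:ℝ), hk.le⟩
  · -- Part 2 : convergence in distribution of Δ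
    intro f
    have hcont : Continuous fun x : Matrix (Fin n) (Fin d) ℝ => VA⁻¹ * x := by
      refine (LipschitzWith.of_dist_le_mul (K := ⟨c, hc0.le⟩) (fun x y => ?_)).continuous
      rw [dist_eq_norm, dist_eq_norm, ← Matrix.mul_sub]
      exact hVAinv _
    set f' : BoundedContinuousFunction (Matrix (Fin n) (Fin d) ℝ) ℝ :=
      f.compContinuous ⟨fun x => VA⁻¹ * x, hcont⟩ with hf'
    have hf'app : ∀ x, f' x = f (VA⁻¹ * x) := fun x => rfl
    have htarget : ∫ x, f (VA⁻¹ * x) ∂ν = ∫ x, f' x ∂ν := rfl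
    have hlim := hydist' f'
    suffices hdiff0 : Tendsto
        (fun m => (∫ ω, f (Δ m ω) ∂μ) - ∫ ω, f' (s m ω) ∂μ) atTop (nhds 0) by
      have := hdiff0.add hlim
      rw [zero_add] at this
      rw [htarget]
      convert this using 2 with m
      ring
    rw [NormedAddCommGroup.tendsto_nhds_zero]
    intro ε hε
    obtain ⟨B, hBdef⟩ : ∃ B : ℝ, B = ‖f‖ + 1 := ⟨_, rfl⟩
    have hB : ∀ x, |f x| ≤ B := by
      intro x
      have := f.norm_coe_le_norm x
      rw [Real.norm_eq_abs] at this
      rw [hBdef]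
      linarith
    have hB0 : (0:ℝ) < B := by rw [hBdef]; positivity
    obtain ⟨ρ, hρdef⟩ : ∃ ρ : ℝ, ρ = ε/(8*B) := ⟨_, rfl⟩
    have hρ0 : 0 < ρ := by rw [hρdef]; exact div_pos hε (by linarith)
    obtain ⟨C1, hC1ge, hC1tail⟩ := htail (ρ/2) (by positivity)
    -- uniform continuity of f on a big closed ball
    obtain ⟨R, hRdef⟩ : ∃ R : ℝ, R = c*C1 + 1 := ⟨_, rfl⟩
    have hcomp : IsCompact (Metric.closedBall (0 : Matrix (Fin n) (Fin d) ℝ) R) :=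
      isCompact_closedBall _ _
    have huc := hcomp.uniformContinuousOn_of_continuous f.continuous.continuousOn
    obtain ⟨θ, hθ0, hθ⟩ := Metric.uniformContinuousOn_iff.mp huc (ε/4) (by positivity)
    obtain ⟨θ'', hθ''def⟩ : ∃ t : ℝ, t = min 1 θ := ⟨_, rfl⟩
    have hθ''0 : 0 < θ'' := by rw [hθ''def]; exact lt_min one_pos hθ0
    obtain ⟨θ', hθ'def⟩ : ∃ t : ℝ, t = min (1/(2*c)) (θ'' / (2*c*c*C1 + 1)) := ⟨_, rfl⟩
    have hC10 : (0:ℝ) < C1 := lt_of_lt_of_le one_pos hC1ge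
    have hden : (0:ℝ) < 2*c*c*C1 + 1 := by positivity
    have hθ'0 : 0 < θ' := by
      rw [hθ'def]
      exact lt_min (by positivity) (div_pos hθ''0 hden)
    have hev1 := hsint f'
    have hev2 := hsint (cutoff C1)
    have hev3 : ∀ᶠ m in atTop, ∫ ω, cutoff C1 (s m ω) ∂μ < ρ :=
      (hydist' (cutoff C1)).eventually_lt_const (lt_of_le_of_lt hC1tail (by linarith))
    have hev4 : ∀ᶠ m in atTop, μ {ω | θ' ≤ |em m ω|} < ENNReal.ofReal ρ :=
      (hem _ hθ'0).eventually_lt_const (by simp [ENNReal.ofReal_pos, hρ0])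
    filter_upwards [hev1, hev2, hev3, hev4] with m h1 h2 h3 h4
    -- integrability of f ∘ Δ
    have hfΔaesm : AEStronglyMeasurable (fun ω => f (Δ m ω)) μ :=
      f.continuous.comp_aestronglyMeasurable (hΔmeas m)
    have hfΔint : Integrable (fun ω => f (Δ m ω)) μ := by
      refine (integrable_const B).mono' hfΔaesm (ae_of_all _ (fun ω => ?_))
      rw [Real.norm_eq_abs]
      exact hB _
    -- the exceptional set
    set A : Set Ω := {ω | θ' ≤ |em m ω|} ∪ {ω | C1 ≤ ‖s m ω‖} with hAdef
    -- pointwise bound off A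
    have hptwise : ∀ ω, ω ∉ A → |f (Δ m ω) - f' (s m ω)| ≤ ε/4 := by
      intro ω hω
      simp only [hAdef, Set.mem_union, Set.mem_setOf_eq, not_or, not_le] at hω
      obtain ⟨hω1, hω2⟩ := hω
      have hcc : c * |em m ω| ≤ 1/2 := by
        have h5 : c * |em m ω| ≤ c * θ' := mul_le_mul_of_nonneg_left hω1.le hc0.le
        have h6 : θ' ≤ 1/(2*c) := hθ'def ▸ min_le_left _ _
        have h7 : c * θ' ≤ c * (1/(2*c)) := mul_le_mul_of_nonneg_left h6 hc0.le
        have h8 : c * (1/(2*c)) = 1/2 := by field_simp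
        linarith
      have hubound : ‖Δ m ω - VA⁻¹ * s m ω‖ ≤ θ'' * (2*c*c*C1 / (2*c*c*C1 + 1)) := by
        refine (hdiffbound m ω hcc).trans ?_
        have e1 : 2*c*c*‖s m ω‖*|em m ω| ≤ 2*c*c*C1*θ' := by
          have hp : ‖s m ω‖ * |em m ω| ≤ C1 * θ' :=
            mul_le_mul hω2.le hω1.le (abs_nonneg _) (le_trans (norm_nonneg _) hω2.le)
          have hq : 2*c*c*(‖s m ω‖*|em m ω|) ≤ 2*c*c*(C1*θ') :=
            mul_le_mul_of_nonneg_left hp (by positivity)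
          have e1a : 2*c*c*‖s m ω‖*|em m ω| = 2*c*c*(‖s m ω‖*|em m ω|) := by ring
          have e1b : 2*c*c*C1*θ' = 2*c*c*(C1*θ') := by ring
          linarith
        have e2 : 2*c*c*C1*θ' ≤ 2*c*c*C1*(θ'' / (2*c*c*C1 + 1)) := by
          have : θ' ≤ θ'' / (2*c*c*C1 + 1) := hθ'def ▸ min_le_right _ _
          have hnn : (0:ℝ) ≤ 2*c*c*C1 := by positivity
          exact mul_le_mul_of_nonneg_left this hnn
        have e3 : 2*c*c*C1*(θ'' / (2*c*c*C1 + 1)) = θ'' * (2*c*c*C1 / (2*c*c*C1 + 1)) := by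
          ring
        linarith
      have hfrac : 2*c*c*C1 / (2*c*c*C1 + 1) < 1 := by
        rw [div_lt_one hden]; linarith
      have hsmall : ‖Δ m ω - VA⁻¹ * s m ω‖ < θ'' := by
        have : θ'' * (2*c*c*C1 / (2*c*c*C1 + 1)) < θ'' * 1 :=
          mul_lt_mul_of_pos_left hfrac hθ''0
        rw [mul_one] at this
        linarith
      have hvball : VA⁻¹ * s m ω ∈ Metric.closedBall (0 : Matrix (Fin n) (Fin d) ℝ) R := by
        rw [Metric.mem_closedBall, dist_zero_right]
        have := hVAinv (s m ω)
        have : ‖VA⁻¹ * s m ω‖ ≤ c * C1 := by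
          refine (hVAinv (s m ω)).trans ?_
          exact mul_le_mul_of_nonneg_left hω2.le hc0.le
        rw [hRdef]; linarith
      have huball : Δ m ω ∈ Metric.closedBall (0 : Matrix (Fin n) (Fin d) ℝ) R := by
        rw [Metric.mem_closedBall, dist_zero_right]
        have e1 : ‖Δ m ω‖ ≤ ‖VA⁻¹ * s m ω‖ + ‖Δ m ω - VA⁻¹ * s m ω‖ := by
          have := norm_add_le (VA⁻¹ * s m ω) (Δ m ω - VA⁻¹ * s m ω)
          simpa using this
        have e2 : ‖VA⁻¹ * s m ω‖ ≤ c * C1 := by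
          refine (hVAinv (s m ω)).trans ?_
          exact mul_le_mul_of_nonneg_left hω2.le hc0.le
        have e3 : θ'' ≤ 1 := hθ''def ▸ min_le_left _ _
        rw [hRdef]
        linarith [hsmall]
      have hdist : dist (Δ m ω) (VA⁻¹ * s m ω) < θ := by
        rw [dist_eq_norm]
        exact lt_of_lt_of_le hsmall (hθ''def ▸ min_le_right 1 θ)
      have := hθ (Δ m ω) huball (VA⁻¹ * s m ω) hvball hdist
      rw [Real.dist_eq, ← hf'app (s m ω)] at this
      exact this.le
    -- bound of the integral of the difference
    have hdint : Integrable (fun ω => |f (Δ m ω) - f' (s m ω)|) μ := (hfΔint.sub h1).abs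
    have hbound : ∫ ω, |f (Δ m ω) - f' (s m ω)| ∂μ ≤ ε/4 + (2*B) * (μ A).toReal := by
      refine aux_integral_le hdint (fun ω => abs_nonneg _) (fun ω => ?_)
        (by positivity) (by positivity) hptwise
      have b1 := hB (Δ m ω)
      have b2 := hB (VA⁻¹ * s m ω)
      rw [← hf'app] at b2
      have := abs_sub (f (Δ m ω)) (f' (s m ω))
      calc |f (Δ m ω) - f' (s m ω)| ≤ |f (Δ m ω)| + |f' (s m ω)| := abs_sub _ _
        _ ≤ 2*B := by linarith
    -- measure of A
    have hμA : (μ A).toReal ≤ 2*ρ := by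
      have hA1 : μ A ≤ μ {ω | θ' ≤ |em m ω|} + μ {ω | C1 ≤ ‖s m ω‖} := measure_union_le _ _
      have hA2 : μ {ω | C1 ≤ ‖s m ω‖} ≤ ENNReal.ofReal ρ := by
        refine (hmarkov C1 m h2).trans ?_
        exact ENNReal.ofReal_le_ofReal h3.le
      have hA3 : μ A ≤ ENNReal.ofReal ρ + ENNReal.ofReal ρ := hA1.trans (add_le_add h4.le hA2)
      have hA4 : μ A ≤ ENNReal.ofReal (2*ρ) := by
        rw [two_mul, ENNReal.ofReal_add hρ0.le hρ0.le]
        exact hA3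
      exact ENNReal.toReal_le_of_le_ofReal (by positivity) hA4
    have hfinal : |(∫ ω, f (Δ m ω) ∂μ) - ∫ ω, f' (s m ω) ∂μ| ≤ ε/4 + (2*B)*(2*ρ) := by
      rw [← integral_sub hfΔint h1]
      have habs : |∫ ω, (f (Δ m ω) - f' (s m ω)) ∂μ|
          ≤ ∫ ω, |f (Δ m ω) - f' (s m ω)| ∂μ := by
        have := norm_integral_le_integral_norm (fun ω => f (Δ m ω) - f' (s m ω)) (μ := μ)
        simpa [Real.norm_eq_abs] using this
      have hmul : (2*B) * (μ A).toReal ≤ (2*B)*(2*ρ) :=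
        mul_le_mul_of_nonneg_left hμA (by positivity)
      linarith
    rw [Real.norm_eq_abs]
    have hρval : (2*B)*(2*ρ) = ε/2 := by
      have hBne : B ≠ 0 := ne_of_gt hB0
      rw [hρdef]
      field_simp
      ring
    rw [hρval] at hfinal
    calc |(∫ ω, f (Δ m ω) ∂μ) - ∫ ω, f' (s m ω) ∂μ| ≤ ε/4 + ε/2 := hfinal
      _ < ε := by linarith
end
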